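/- If χ is a quadratic (real-valued, nontrivial) Dirichlet character, then L(χ, 1) ≠ 0. -/
import Mathlib

theorem quadratic_LFunction_one_ne_zero {N : ℕ} [NeZero N]
    (χ : DirichletCharacter ℂ N) (hχ : χ ≠ 1)
    (hquad : ∀ n : ZMod N, χ n = -1 ∨ χ n = 0 ∨ χ n = 1) :
    χ.LFunction 1 ≠ 0 :=
  DirichletCharacter.LFunction_ne_zero_of_one_le_re χ (.inl hχ) (by norm_num)
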